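/- The FBDF2 method is consistent of order 2: h^(-α) · ((3 - 4e^(-h) + e^(-2h))/2)^α = 1 + O(h²) as h → 0⁺. -/

import Mathlib

open Asymptotics Real

/-- Taylor estimate: `|exp x - (1 + x + x²/2)| ≤ (2/9)|x|³` for `|x| ≤ 1`. -/
lemma exp_taylor2_aux (x : ℝ) (hx : |x| ≤ 1) :
    |Real.exp x - (1 + x + x ^ 2 / 2)| ≤ 2 / 9 * |x| ^ 3 := by
  have h := Real.exp_bound hx (n := 3) (by norm_num)
  have hs : ∑ m ∈ Finset.range 3, x ^ m / (m.factorial : ℝ) = 1 + x + x ^ 2 / 2 := by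
    simp [Finset.sum_range_succ, Nat.factorial]
  rw [hs] at h
  calc |Real.exp x - (1 + x + x ^ 2 / 2)| ≤ |x| ^ 3 * (↑(3 : ℕ).succ / (↑(3 : ℕ).factorial * ↑(3 : ℕ))) := h
    _ = 2 / 9 * |x| ^ 3 := by norm_num [Nat.factorial]; ring

/-- For `0 < α < 1` and `x ≥ 0`, `|x^α - 1| ≤ |x - 1|`. -/
lemma rpow_sub_one_abs_le (α x : ℝ) (hα : 0 < α) (hα1 : α < 1) (hx : 0 ≤ x) :
    |x ^ α - 1| ≤ |x - 1| := by
  rcases eq_or_lt_of_le hx with h0 | h0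
  · rw [← h0, Real.zero_rpow hα.ne']
  rcases le_or_gt x 1 with h1 | h1
  · have hub : x ^ α ≤ 1 := Real.rpow_le_one hx h1 hα.le
    have hlb : x ≤ x ^ α := by
      have := Real.rpow_le_rpow_of_exponent_ge h0 h1 hα1.le
      rwa [Real.rpow_one] at this
    rw [abs_of_nonpos (by linarith), abs_of_nonpos (by linarith)]
    linarith
  · have hub : x ^ α ≤ x := by
      have := Real.rpow_le_rpow_of_exponent_le h1.le hα1.le
      rwa [Real.rpow_one] at this
    have hlb : 1 ≤ x ^ α := Real.one_le_rpow h1.le hα.le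
    rw [abs_of_nonneg (by linarith), abs_of_nonneg (by linarith)]
    linarith

/-- The FBDF2 method is consistent of order 2:
`h^(-α) * ((3 - 4 e^(-h) + e^(-2h))/2)^α = 1 + O(h²)` as `h → 0⁺`. -/
theorem stmt_1 (α : ℝ) (hα : 0 < α) (hα1 : α < 1) :
    (fun h : ℝ => h ^ (-α) * ((3 - 4 * Real.exp (-h) + Real.exp (-2*h)) / 2) ^ α - 1)
      =O[nhdsWithin 0 (Set.Ioi 0)] (fun h : ℝ => h ^ 2) := by
  rw [Asymptotics.isBigO_iff]
  refine ⟨4 / 3, ?_⟩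
  have hmem : Set.Ioo (-(1/2) : ℝ) (1/2) ∈ nhds (0 : ℝ) :=
    Ioo_mem_nhds (by norm_num) (by norm_num)
  filter_upwards [self_mem_nhdsWithin, nhdsWithin_le_nhds hmem] with h hpos hlt
  simp only [Set.mem_Ioi] at hpos
  obtain ⟨_, hhalf⟩ := hlt
  set g : ℝ := (3 - 4 * Real.exp (-h) + Real.exp (-2*h)) / 2 with hg
  -- bounds on the two remainders
  have hr1 : |Real.exp (-h) - (1 - h + h ^ 2 / 2)| ≤ 2 / 9 * h ^ 3 := by
    have := exp_taylor2_aux (-h) (by rw [abs_neg, abs_of_pos hpos]; linarith)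
    rw [abs_neg, abs_of_pos hpos] at this
    convert this using 2; ring
  have hr2 : |Real.exp (-2*h) - (1 - 2*h + 2*h ^ 2)| ≤ 16 / 9 * h ^ 3 := by
    have := exp_taylor2_aux (-2*h) (by rw [abs_of_nonpos (by linarith)]; linarith)
    rw [abs_of_nonpos (by linarith : -2*h ≤ 0)] at this
    calc |Real.exp (-2*h) - (1 - 2*h + 2*h ^ 2)|
        = |Real.exp (-2*h) - (1 + -2*h + (-2*h) ^ 2 / 2)| := by ring_nf
      _ ≤ 2 / 9 * (- (-2*h)) ^ 3 := this
      _ = 16 / 9 * h ^ 3 := by ring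
  -- |g - h| ≤ 4/3 h³
  have hgh : |g - h| ≤ 4 / 3 * h ^ 3 := by
    have : g - h = (-4 * (Real.exp (-h) - (1 - h + h ^ 2 / 2))
        + (Real.exp (-2*h) - (1 - 2*h + 2*h ^ 2))) / 2 := by rw [hg]; ring
    rw [this]
    calc |(-4 * (Real.exp (-h) - (1 - h + h ^ 2 / 2))
          + (Real.exp (-2*h) - (1 - 2*h + 2*h ^ 2))) / 2|
        ≤ (4 * |Real.exp (-h) - (1 - h + h ^ 2 / 2)|
          + |Real.exp (-2*h) - (1 - 2*h + 2*h ^ 2)|) / 2 := by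
          rw [abs_div]
          gcongr ?_ / ?_
          · calc _ ≤ |(-4) * (Real.exp (-h) - (1 - h + h ^ 2 / 2))|
                + |Real.exp (-2*h) - (1 - 2*h + 2*h ^ 2)| := abs_add_le _ _
              _ = _ := by rw [abs_mul]; norm_num
          · norm_num
      _ ≤ (4 * (2/9 * h ^ 3) + 16/9 * h ^ 3) / 2 := by gcongr
      _ = 4 / 3 * h ^ 3 := by ring
  -- g > 0
  have hx1 : Real.exp (-h) < 1 := Real.exp_lt_one_iff.mpr (by linarith)
  have hx0 : 0 < Real.exp (-h) := Real.exp_pos _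
  have hg0 : 0 < g := by
    have h2 : Real.exp (-2*h) = Real.exp (-h) ^ 2 := by
      rw [← Real.exp_nat_mul]; ring_nf
    rw [hg, h2]
    nlinarith [sq_nonneg (1 - Real.exp (-h))]
  -- rewrite h^(-α) * g^α = (g/h)^α
  have hrw : h ^ (-α) * g ^ α = (g / h) ^ α := by
    rw [Real.div_rpow hg0.le hpos.le, Real.rpow_neg hpos.le, div_eq_mul_inv, mul_comm]
  rw [hrw]
  -- conclude
  have hkey : |(g / h) ^ α - 1| ≤ |g / h - 1| :=
    rpow_sub_one_abs_le α (g / h) hα hα1 (by positivity)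
  have : |g / h - 1| = |g - h| / h := by
    have he : g / h - 1 = (g - h) / h := by field_simp
    rw [he, abs_div, abs_of_pos hpos]
  calc |(g / h) ^ α - 1| ≤ |g - h| / h := by rw [← this]; exact hkey
    _ ≤ (4 / 3 * h ^ 3) / h := by gcongr
    _ = 4 / 3 * h ^ 2 := by field_simp
    _ ≤ 4 / 3 * |h ^ 2| := by gcongr; exact le_abs_self _
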